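/- Let m ≥ 1, a ∈ ℤ^m, b ∈ ℕ with gcd(a,b) = 1, and y = a/b ∈ ℚ^m. For an integer q ≥ 1, an integer r with 1 ≤ |r| < q, and δ₁, δ₂ ∈ [0, 1/2), let A''(q,δ₁) be the set of x ∈ [0,1)^m with |qx - p - y| < δ₁ for some p ∈ ℤ^m satisfying gcd(q, bp+a) = 1, and let A(r,δ₂) be the set of x ∈ [0,1)^m with |rx - s - y| < δ₂ for some s ∈ ℤ^m. Then |A''(q,δ₁) ∩ A(r,δ₂)| ≤ C·(b δ₁ δ₂)^m for a constant C depending only on m. -/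

import Mathlib

open MeasureTheory Set

set_option maxHeartbeats 800000 in
theorem stmt4 (m : ℕ) (hm : 1 ≤ m) :
    ∃ C : ℝ, 0 < C ∧
      ∀ (a : Fin m → ℤ) (b : ℕ), 1 ≤ b →
        GCDMonoid.gcd (Finset.univ.gcd a) (b : ℤ) = 1 →
        ∀ (q : ℕ), 1 ≤ q → ∀ (r : ℤ), 1 ≤ |r| → |r| < (q : ℤ) →
        ∀ (δ₁ δ₂ : ℝ), 0 ≤ δ₁ → δ₁ < 1/2 → 0 ≤ δ₂ → δ₂ < 1/2 →
        volume ({x : Fin m → ℝ | (∀ i, x i ∈ Set.Ico (0:ℝ) 1) ∧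
            ∃ p : Fin m → ℤ,
              (∀ i, |(q : ℝ) * x i - p i - (a i : ℝ) / b| < δ₁) ∧
              GCDMonoid.gcd (q : ℤ)
                (Finset.univ.gcd (fun i => (b : ℤ) * p i + a i)) = 1} ∩
          {x : Fin m → ℝ | (∀ i, x i ∈ Set.Ico (0:ℝ) 1) ∧
            ∃ s : Fin m → ℤ,
              ∀ i, |(r : ℝ) * x i - s i - (a i : ℝ) / b| < δ₂}) ≤
        ENNReal.ofReal (C * ((b : ℝ) * δ₁ * δ₂) ^ m) := by
  classical
  refine ⟨100 ^ m, by positivity, ?_⟩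
  intro a b hb _hab q hq r hr1 hrq δ₁ δ₂ hd10 hd1u hd20 hd2u
  -- basic facts
  have hq0 : (0:ℤ) < (q:ℤ) := by exact_mod_cast hq
  have hqR : (0:ℝ) < (q:ℝ) := by exact_mod_cast hq
  have hrne : r ≠ 0 := by intro h; rw [h] at hr1; simp at hr1
  have hRne : ((r:ℝ)) ≠ 0 := by exact_mod_cast hrne
  have hR0 : (0:ℝ) < |(r:ℝ)| := abs_pos.mpr hRne
  have hb0 : (0:ℝ) < (b:ℝ) := by exact_mod_cast hb
  have hbZ : ((b:ℤ)) ≠ 0 := by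
    have : (0:ℤ) < (b:ℤ) := by exact_mod_cast hb
    exact this.ne'
  -- gcd data
  obtain ⟨e, q', r', he_def, heq', her'⟩ :
      ∃ e q' r' : ℤ, e = (Int.gcd (q:ℤ) r : ℤ) ∧ e * q' = (q:ℤ) ∧ e * r' = r :=
    ⟨_, _, _, rfl, Int.mul_ediv_cancel' (Int.gcd_dvd_left _ _),
      Int.mul_ediv_cancel' (Int.gcd_dvd_right _ _)⟩
  have hgcdpos : 0 < Int.gcd (q:ℤ) r := Int.gcd_pos_iff.mpr (Or.inl hq0.ne')
  have he1 : 1 ≤ e := by rw [he_def]; exact_mod_cast hgcdpos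
  have heZ : e ≠ 0 := by omega
  have heR : (0:ℝ) < (e:ℝ) := by exact_mod_cast (by omega : (0:ℤ) < e)
  have hr'ne : r' ≠ 0 := by
    intro h; rw [h, mul_zero] at her'; exact hrne her'.symm
  have hcop : IsCoprime r' q' := by
    rw [Int.isCoprime_iff_gcd_eq_one, Int.gcd_comm]
    have hq' : q' = (q:ℤ) / (Int.gcd (q:ℤ) r : ℤ) := by
      rw [← he_def, ← heq', Int.mul_ediv_cancel_left _ heZ]
    have hr'2 : r' = r / (Int.gcd (q:ℤ) r : ℤ) := by
      rw [← he_def, ← her', Int.mul_ediv_cancel_left _ heZ]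
    rw [hq', hr'2]
    exact Int.gcd_div_gcd_div_gcd hgcdpos
  -- the bound quantity
  set B : ℝ := (b:ℝ) * (|(r:ℝ)| * δ₁ + (q:ℝ) * δ₂) with hB_def
  set L : ℝ := min (2*δ₁/(q:ℝ)) (2*δ₂/|(r:ℝ)|) with hL_def
  have hL0 : 0 ≤ L := le_min (by positivity) (by positivity)
  -- divisibility of t by e
  have hedvd : ∀ (p s : Fin m → ℤ) (i : Fin m),
      e ∣ ((q:ℤ)*((b:ℤ)*s i + a i) - r*((b:ℤ)*p i + a i)) := by
    intro p s i
    exact ⟨q' * ((b:ℤ)*s i + a i) - r' * ((b:ℤ)*p i + a i), by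
      rw [← heq', ← her']; ring⟩
  -- bound on t
  have tkey : ∀ (x : Fin m → ℝ) (p s : Fin m → ℤ),
      (∀ i, |(q : ℝ) * x i - p i - (a i : ℝ) / b| < δ₁) →
      (∀ i, |(r : ℝ) * x i - s i - (a i : ℝ) / b| < δ₂) →
      ∀ i, |((((q:ℤ)*((b:ℤ)*s i + a i) - r*((b:ℤ)*p i + a i)) : ℤ) : ℝ)| < B := by
    intro x p s hp hs i
    have hid : ((((q:ℤ)*((b:ℤ)*s i + a i) - r*((b:ℤ)*p i + a i)) : ℤ) : ℝ)
        = (b:ℝ)*((r:ℝ)*((q:ℝ)*x i - p i - (a i:ℝ)/(b:ℝ))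
            - (q:ℝ)*((r:ℝ)*x i - s i - (a i:ℝ)/(b:ℝ))) := by
      push_cast
      field_simp
      ring
    rw [hid, hB_def, abs_mul, abs_of_pos hb0]
    refine mul_lt_mul_of_pos_left ?_ hb0
    calc |(r:ℝ)*((q:ℝ)*x i - p i - (a i:ℝ)/(b:ℝ))
            - (q:ℝ)*((r:ℝ)*x i - s i - (a i:ℝ)/(b:ℝ))|
        ≤ |(r:ℝ)| * |(q:ℝ)*x i - p i - (a i:ℝ)/(b:ℝ)|
          + (q:ℝ) * |(r:ℝ)*x i - s i - (a i:ℝ)/(b:ℝ)| := by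
          refine (abs_sub _ _).trans ?_
          rw [abs_mul, abs_mul, abs_of_pos hqR]
      _ < |(r:ℝ)| * δ₁ + (q:ℝ) * δ₂ :=
          add_lt_add (mul_lt_mul_of_pos_left (hp i) hR0)
            (mul_lt_mul_of_pos_left (hs i) hqR)
  -- split on emptiness
  rcases Set.eq_empty_or_nonempty
      ({x : Fin m → ℝ | (∀ i, x i ∈ Set.Ico (0:ℝ) 1) ∧
            ∃ p : Fin m → ℤ,
              (∀ i, |(q : ℝ) * x i - p i - (a i : ℝ) / b| < δ₁) ∧
              GCDMonoid.gcd (q : ℤ)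
                (Finset.univ.gcd (fun i => (b : ℤ) * p i + a i)) = 1} ∩
          {x : Fin m → ℝ | (∀ i, x i ∈ Set.Ico (0:ℝ) 1) ∧
            ∃ s : Fin m → ℤ,
              ∀ i, |(r : ℝ) * x i - s i - (a i : ℝ) / b| < δ₂}) with hE | hE
  · rw [hE]
    simp
  obtain ⟨xb, hxb⟩ := hE
  simp only [Set.mem_inter_iff, Set.mem_setOf_eq] at hxb
  obtain ⟨⟨hxb1, pb, hpb, hpbg⟩, ⟨-, sb, hsb⟩⟩ := hxb
  -- nonemptiness gives e < B
  have hBe : (e:ℝ) < B := by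
    have hex : ∃ i, (q:ℤ)*((b:ℤ)*sb i + a i) - r*((b:ℤ)*pb i + a i) ≠ 0 := by
      by_contra h
      push_neg at h
      have hqdvd : ∀ i, (q:ℤ) ∣ r * ((b:ℤ)*pb i + a i) := by
        intro i
        exact ⟨(b:ℤ)*sb i + a i, by have h0 := h i; linarith⟩
      have hGdvd : (q:ℤ) ∣ Finset.univ.gcd (fun i => r * ((b:ℤ)*pb i + a i)) :=
        Finset.dvd_gcd fun i _ => hqdvd i
      rw [Finset.gcd_mul_left, ← Int.abs_eq_normalize] at hGdvd
      have hcpb : IsCoprime (q:ℤ) (Finset.univ.gcd fun i => (b:ℤ)*pb i + a i) := by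
        rw [Int.isCoprime_iff_gcd_eq_one]
        exact_mod_cast (Int.coe_gcd _ _).trans hpbg
      have hdr : (q:ℤ) ∣ |r| := hcpb.dvd_of_dvd_mul_right hGdvd
      have : (q:ℤ) ≤ |r| := Int.le_of_dvd (abs_pos.mpr hrne) hdr
      omega
    obtain ⟨i₀, hi₀⟩ := hex
    have h1 : e ≤ |(q:ℤ)*((b:ℤ)*sb i₀ + a i₀) - r*((b:ℤ)*pb i₀ + a i₀)| :=
      Int.le_of_dvd (abs_pos.mpr hi₀) ((dvd_abs _ _).mpr (hedvd pb sb i₀))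
    have h2 := tkey xb pb sb hpb hsb i₀
    have h3 : (e:ℝ) ≤ |(((q:ℤ)*((b:ℤ)*sb i₀ + a i₀) - r*((b:ℤ)*pb i₀ + a i₀) : ℤ) : ℝ)| := by
      exact_mod_cast h1
    linarith
  have hB0 : 0 < B := lt_of_le_of_lt heR.le hBe
  -- ceiling
  set u₀ : ℤ := ⌈B / (e:ℝ)⌉ with hu0_def
  have hu0pos : 1 ≤ u₀ := by
    rw [hu0_def]
    refine Int.ceil_pos.mpr ?_
    positivity
  have hu0le : (u₀:ℝ) < B/(e:ℝ) + 1 := Int.ceil_lt_add_one _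
  -- admissibility predicate and choice
  set Adm : Fin m → ℤ → ℤ → Prop := fun i tt ss =>
      (∃ z : ℝ, 0 ≤ z ∧ z < 1 ∧ |(r:ℝ)*z - (ss:ℝ) - (a i:ℝ)/(b:ℝ)| < δ₂) ∧
      ∃ pp : ℤ, (b:ℤ)*(q:ℤ)*ss + ((q:ℤ) - r)*(a i) - tt = (b:ℤ)*r*pp
    with hAdm_def
  set σ : Fin m → ℤ → ℤ := fun i tt =>
      if h : ∃ ss, Adm i tt ss then h.choose else 0 with hσ_def
  have hσA : ∀ i tt, (∃ ss, Adm i tt ss) → Adm i tt (σ i tt) := by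
    intro i tt h
    simp only [hσ_def]
    rw [dif_pos h]
    exact h.choose_spec
  -- box data
  set sfun : (Fin m → ℤ × ℤ) → Fin m → ℤ :=
      fun ι i => σ i (e * (ι i).1) + r' * (ι i).2 with hsfun_def
  set pfun : (Fin m → ℤ × ℤ) → Fin m → ℤ :=
      fun ι i => ((b:ℤ)*(q:ℤ)*(sfun ι i) + ((q:ℤ) - r)*(a i) - e * (ι i).1)
        / ((b:ℤ)*r) with hpfun_def
  set Box : (Fin m → ℤ × ℤ) → Set (Fin m → ℝ) := fun ι =>
      Set.pi Set.univ (fun i => Set.Icc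
        (max (((pfun ι i : ℝ) + (a i:ℝ)/(b:ℝ) - δ₁)/(q:ℝ))
             (((sfun ι i : ℝ) + (a i:ℝ)/(b:ℝ))/(r:ℝ) - δ₂/|(r:ℝ)|))
        (min (((pfun ι i : ℝ) + (a i:ℝ)/(b:ℝ) + δ₁)/(q:ℝ))
             (((sfun ι i : ℝ) + (a i:ℝ)/(b:ℝ))/(r:ℝ) + δ₂/|(r:ℝ)|)))
    with hBox_def
  set Ifin : Finset (Fin m → ℤ × ℤ) :=
      Fintype.piFinset (fun _ => (Finset.Icc (-u₀) u₀) ×ˢ (Finset.Icc (-e) e))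
    with hIfin_def
  -- volume of each box
  have hvol : ∀ ι, volume (Box ι) ≤ ENNReal.ofReal L ^ m := by
    intro ι
    rw [hBox_def]
    rw [volume_pi_pi]
    have hle : ∀ i : Fin m, volume (Set.Icc
        (max (((pfun ι i : ℝ) + (a i:ℝ)/(b:ℝ) - δ₁)/(q:ℝ))
             (((sfun ι i : ℝ) + (a i:ℝ)/(b:ℝ))/(r:ℝ) - δ₂/|(r:ℝ)|))
        (min (((pfun ι i : ℝ) + (a i:ℝ)/(b:ℝ) + δ₁)/(q:ℝ))
             (((sfun ι i : ℝ) + (a i:ℝ)/(b:ℝ))/(r:ℝ) + δ₂/|(r:ℝ)|)))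
        ≤ ENNReal.ofReal L := by
      intro i
      rw [Real.volume_Icc]
      refine ENNReal.ofReal_le_ofReal ?_
      set P : ℝ := (pfun ι i : ℝ) + (a i:ℝ)/(b:ℝ) with hP
      set c : ℝ := ((sfun ι i : ℝ) + (a i:ℝ)/(b:ℝ))/(r:ℝ) with hc
      have h1 : min ((P + δ₁)/(q:ℝ)) (c + δ₂/|(r:ℝ)|) ≤ (P + δ₁)/(q:ℝ) := min_le_left _ _
      have h2 : (P - δ₁)/(q:ℝ) ≤ max ((P - δ₁)/(q:ℝ)) (c - δ₂/|(r:ℝ)|) := le_max_left _ _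
      have h3 : min ((P + δ₁)/(q:ℝ)) (c + δ₂/|(r:ℝ)|) ≤ c + δ₂/|(r:ℝ)| := min_le_right _ _
      have h4 : c - δ₂/|(r:ℝ)| ≤ max ((P - δ₁)/(q:ℝ)) (c - δ₂/|(r:ℝ)|) := le_max_right _ _
      have e1 : (P + δ₁)/(q:ℝ) - (P - δ₁)/(q:ℝ) = 2*δ₁/(q:ℝ) := by ring
      have e2 : (c + δ₂/|(r:ℝ)|) - (c - δ₂/|(r:ℝ)|) = 2*δ₂/|(r:ℝ)| := by ring
      rw [hL_def]
      refine le_min (by linarith) (by linarith)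
    calc ∏ i : Fin m, volume (Set.Icc
        (max (((pfun ι i : ℝ) + (a i:ℝ)/(b:ℝ) - δ₁)/(q:ℝ))
             (((sfun ι i : ℝ) + (a i:ℝ)/(b:ℝ))/(r:ℝ) - δ₂/|(r:ℝ)|))
        (min (((pfun ι i : ℝ) + (a i:ℝ)/(b:ℝ) + δ₁)/(q:ℝ))
             (((sfun ι i : ℝ) + (a i:ℝ)/(b:ℝ))/(r:ℝ) + δ₂/|(r:ℝ)|)))
        ≤ ∏ _i : Fin m, ENNReal.ofReal L := Finset.prod_le_prod' fun i _ => hle i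
      _ = ENNReal.ofReal L ^ m := by
          rw [Finset.prod_const, Finset.card_univ, Fintype.card_fin]
  refine le_trans (measure_mono ?_) (le_trans (measure_biUnion_finset_le Ifin Box) ?_)
  · -- covering
    intro x hx
    simp only [Set.mem_inter_iff, Set.mem_setOf_eq] at hx
    obtain ⟨⟨hx1, p, hp, hpg⟩, ⟨-, s, hs⟩⟩ := hx
    have htd : ∀ i, e ∣ ((q:ℤ)*((b:ℤ)*s i + a i) - r*((b:ℤ)*p i + a i)) := hedvd p s
    have htB := tkey x p s hp hs
    set t : Fin m → ℤ := fun i => (q:ℤ)*((b:ℤ)*s i + a i) - r*((b:ℤ)*p i + a i) with ht_def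
    set u : Fin m → ℤ := fun i => t i / e with hu_def
    have hut : ∀ i, e * u i = t i := by
      intro i
      simp only [hu_def]
      exact Int.mul_ediv_cancel' (htd i)
    have hAdm : ∀ i, Adm i (t i) (s i) := by
      intro i
      simp only [hAdm_def]
      refine ⟨⟨x i, (hx1 i).1, (hx1 i).2, hs i⟩, ⟨p i, ?_⟩⟩
      simp only [ht_def]
      ring
    have hσA2 : ∀ i, Adm i (t i) (σ i (t i)) := fun i => hσA i (t i) ⟨s i, hAdm i⟩
    have hkd : ∀ i, r' ∣ (s i - σ i (t i)) := by
      intro i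
      have h1 := hσA2 i
      simp only [hAdm_def] at h1
      obtain ⟨-, pp, hpp⟩ := h1
      have h2 : (b:ℤ)*(q:ℤ)*(s i) + ((q:ℤ) - r)*(a i) - t i = (b:ℤ)*r*(p i) := by
        simp only [ht_def]; ring
      have h3 : (b:ℤ)*((q:ℤ)*(s i - σ i (t i))) = (b:ℤ)*(r*(p i - pp)) := by
        linear_combination h2 - hpp
      have h4 := mul_left_cancel₀ hbZ h3
      have h5 : e*(q'*(s i - σ i (t i))) = e*(r'*(p i - pp)) := by
        rw [← mul_assoc, ← mul_assoc, heq', her']; exact h4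
      have h6 := mul_left_cancel₀ heZ h5
      exact hcop.dvd_of_dvd_mul_left ⟨p i - pp, h6⟩
    set k : Fin m → ℤ := fun i => (s i - σ i (t i)) / r' with hk_def
    have hks : ∀ i, σ i (t i) + r' * k i = s i := by
      intro i
      simp only [hk_def]
      rw [Int.mul_ediv_cancel' (hkd i)]
      omega
    have hub : ∀ i, -u₀ ≤ u i ∧ u i ≤ u₀ := by
      intro i
      have habs : (e:ℝ) * ((|u i| : ℤ) : ℝ) = |((t i : ℤ):ℝ)| := by
        rw [← hut i]
        push_cast
        rw [abs_mul, abs_of_nonneg heR.le]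
      have h7 : (e:ℝ) * ((|u i| : ℤ):ℝ) < B := by rw [habs]; exact htB i
      have h8 : ((|u i| : ℤ):ℝ) < B / (e:ℝ) := by
        rw [lt_div_iff₀ heR]
        linarith [mul_comm ((|u i| : ℤ):ℝ) (e:ℝ)]
      have h9 : B/(e:ℝ) ≤ (u₀:ℝ) := by rw [hu0_def]; exact Int.le_ceil _
      have h10 : |u i| ≤ u₀ := by exact_mod_cast (h8.trans_le h9).le
      exact abs_le.mp h10
    have hkb : ∀ i, -e ≤ k i ∧ k i ≤ e := by
      intro i
      have h1 := hσA2 i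
      simp only [hAdm_def] at h1
      obtain ⟨⟨z, hz0, hz1, hzabs⟩, -⟩ := h1
      have hxz : |x i - z| < 1 :=
        abs_lt.mpr ⟨by linarith [(hx1 i).1, (hx1 i).2], by linarith [(hx1 i).1, (hx1 i).2]⟩
      have hwin : |(s i:ℝ) - (σ i (t i):ℝ)| < |(r:ℝ)| + 1 := by
        have hid : (s i:ℝ) - (σ i (t i):ℝ) = (r:ℝ)*(x i - z)
            - (((r:ℝ)*x i - s i - (a i:ℝ)/(b:ℝ)) - ((r:ℝ)*z - (σ i (t i):ℝ) - (a i:ℝ)/(b:ℝ))) := by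
          ring
        calc |(s i:ℝ) - (σ i (t i):ℝ)|
            = |(r:ℝ)*(x i - z)
            - (((r:ℝ)*x i - s i - (a i:ℝ)/(b:ℝ)) - ((r:ℝ)*z - (σ i (t i):ℝ) - (a i:ℝ)/(b:ℝ)))| := by
              rw [← hid]
          _ ≤ |(r:ℝ)*(x i - z)|
            + |((r:ℝ)*x i - s i - (a i:ℝ)/(b:ℝ)) - ((r:ℝ)*z - (σ i (t i):ℝ) - (a i:ℝ)/(b:ℝ))| :=
              abs_sub _ _
          _ ≤ |(r:ℝ)| * |x i - z|
            + (|(r:ℝ)*x i - s i - (a i:ℝ)/(b:ℝ)| + |(r:ℝ)*z - (σ i (t i):ℝ) - (a i:ℝ)/(b:ℝ)|) := by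
              rw [abs_mul]
              exact add_le_add le_rfl (abs_sub _ _)
          _ < |(r:ℝ)| * 1 + (δ₂ + δ₂) := by
              have hm := mul_lt_mul_of_pos_left hxz hR0
              have := hs i
              linarith
          _ ≤ |(r:ℝ)| + 1 := by linarith
      have h8 : |s i - σ i (t i)| < |r| + 1 := by exact_mod_cast hwin
      have h9 : k i * r' = s i - σ i (t i) := by
        simp only [hk_def]
        exact Int.ediv_mul_cancel (hkd i)
      have h12 : |r| = e * |r'| := by
        rw [← her', abs_mul, abs_of_nonneg (by omega : (0:ℤ) ≤ e)]
      have h10 : |k i| * |r'| ≤ e * |r'| := by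
        rw [← abs_mul, h9]
        omega
      have h13 : |k i| ≤ e := le_of_mul_le_mul_right h10 (abs_pos.mpr hr'ne)
      exact abs_le.mp h13
    have hι : (fun i => (u i, k i)) ∈ Ifin := by
      rw [hIfin_def, Fintype.mem_piFinset]
      intro i
      rw [Finset.mem_product, Finset.mem_Icc, Finset.mem_Icc]
      exact ⟨hub i, hkb i⟩
    refine Set.mem_biUnion hι ?_
    simp only [hBox_def]
    rw [Set.mem_univ_pi]
    intro i
    have hsf : sfun (fun j => (u j, k j)) i = s i := by
      simp only [hsfun_def]
      rw [hut i]
      exact hks i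
    have hpf : pfun (fun j => (u j, k j)) i = p i := by
      simp only [hpfun_def]
      rw [hsf, hut i]
      have h2 : (b:ℤ)*(q:ℤ)*(s i) + ((q:ℤ) - r)*(a i) - t i = (b:ℤ)*r*(p i) := by
        simp only [ht_def]; ring
      rw [h2, Int.mul_ediv_cancel_left _ (mul_ne_zero hbZ hrne)]
    rw [hsf, hpf, Set.mem_Icc]
    have hpi := abs_lt.mp (hp i)
    have hxc : |x i - ((s i:ℝ) + (a i:ℝ)/(b:ℝ))/(r:ℝ)| ≤ δ₂/|(r:ℝ)| := by
      rw [le_div_iff₀ hR0]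
      have habs2 : |x i - ((s i:ℝ) + (a i:ℝ)/(b:ℝ))/(r:ℝ)| * |(r:ℝ)|
          = |(r:ℝ)*x i - s i - (a i:ℝ)/(b:ℝ)| := by
        rw [← abs_mul, sub_mul, div_mul_cancel₀ _ hRne]
        congr 1
        ring
      rw [habs2]
      exact (hs i).le
    obtain ⟨hxc1, hxc2⟩ := abs_le.mp hxc
    constructor
    · refine max_le ?_ (by linarith)
      rw [div_le_iff₀ hqR]
      linarith [mul_comm (x i) ((q:ℝ)), hpi.1]
    · refine le_min ?_ (by linarith)
      rw [le_div_iff₀ hqR]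
      linarith [mul_comm (x i) ((q:ℝ)), hpi.2]
  · -- counting
    have hcard : Ifin.card = ((u₀ + 1 - -u₀).toNat * (e + 1 - -e).toNat) ^ m := by
      rw [hIfin_def, Fintype.card_piFinset]
      simp only [Finset.card_product, Int.card_Icc]
      rw [Finset.prod_const, Finset.card_univ, Fintype.card_fin]
    have hn1 : (((u₀ + 1 - -u₀).toNat : ℕ) : ℝ) = 2*(u₀:ℝ) + 1 := by
      exact_mod_cast (by omega : (((u₀ + 1 - -u₀).toNat : ℕ) : ℤ) = 2*u₀ + 1)
    have hn2 : (((e + 1 - -e).toNat : ℕ) : ℝ) = 2*(e:ℝ) + 1 := by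
      exact_mod_cast (by omega : (((e + 1 - -e).toNat : ℕ) : ℤ) = 2*e + 1)
    have hcardR : ((Ifin.card : ℕ) : ℝ) ≤ (15*B)^m := by
      rw [hcard]
      push_cast
      rw [hn1, hn2]
      refine pow_le_pow_left₀ (by positivity) ?_ m
      have hu' : (u₀:ℝ) * (e:ℝ) < B + (e:ℝ) := by
        have h := mul_lt_mul_of_pos_right hu0le heR
        have h2 : (B/(e:ℝ) + 1) * (e:ℝ) = B + (e:ℝ) := by field_simp
        linarith
      have he1R : (1:ℝ) ≤ (e:ℝ) := by exact_mod_cast he1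
      have hu1R : (1:ℝ) ≤ (u₀:ℝ) := by exact_mod_cast hu0pos
      have h3 : (u₀:ℝ) * 1 ≤ (u₀:ℝ) * (e:ℝ) :=
        mul_le_mul_of_nonneg_left he1R (by linarith)
      rw [mul_one] at h3
      have hgoal : (2*(u₀:ℝ) + 1) * (2*(e:ℝ) + 1)
          = 4*((u₀:ℝ)*(e:ℝ)) + 2*(u₀:ℝ) + 2*(e:ℝ) + 1 := by ring
      rw [hgoal]
      linarith
    calc ∑ ι ∈ Ifin, volume (Box ι)
        ≤ ∑ _ι ∈ Ifin, ENNReal.ofReal L ^ m := Finset.sum_le_sum fun ι _ => hvol ι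
      _ = (Ifin.card : ENNReal) * ENNReal.ofReal L ^ m := by
          rw [Finset.sum_const, nsmul_eq_mul]
      _ = ENNReal.ofReal ((Ifin.card : ℝ) * L ^ m) := by
          rw [ENNReal.ofReal_mul (Nat.cast_nonneg _), ENNReal.ofReal_pow hL0,
            ENNReal.ofReal_natCast]
      _ ≤ ENNReal.ofReal (100 ^ m * ((b:ℝ) * δ₁ * δ₂) ^ m) := by
          refine ENNReal.ofReal_le_ofReal ?_
          have hBL : B * L ≤ 4 * ((b:ℝ)*δ₁*δ₂) := by
            have l1 : L ≤ 2*δ₁/(q:ℝ) := min_le_left _ _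
            have l2 : L ≤ 2*δ₂/|(r:ℝ)| := min_le_right _ _
            have e1 : (b:ℝ) * |(r:ℝ)| * δ₁*(2*δ₂/|(r:ℝ)|) = 2*((b:ℝ)*δ₁*δ₂) := by
              field_simp
            have e2 : (b:ℝ)*(q:ℝ)*δ₂*(2*δ₁/(q:ℝ)) = 2*((b:ℝ)*δ₁*δ₂) := by
              field_simp
            have m1 : (b:ℝ) * |(r:ℝ)| * δ₁*L ≤ (b:ℝ) * |(r:ℝ)| * δ₁*(2*δ₂/|(r:ℝ)|) :=
              mul_le_mul_of_nonneg_left l2 (by positivity)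
            have m2 : (b:ℝ)*(q:ℝ)*δ₂*L ≤ (b:ℝ)*(q:ℝ)*δ₂*(2*δ₁/(q:ℝ)) :=
              mul_le_mul_of_nonneg_left l1 (by positivity)
            have hBLexp : B * L = (b:ℝ) * |(r:ℝ)| * δ₁*L + (b:ℝ)*(q:ℝ)*δ₂*L := by
              rw [hB_def]; ring
            linarith
          have hbdd : (0:ℝ) ≤ (b:ℝ)*δ₁*δ₂ := by positivity
          calc ((Ifin.card : ℕ):ℝ) * L ^ m
              ≤ (15*B)^m * L^m := mul_le_mul_of_nonneg_right hcardR (pow_nonneg hL0 m)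
            _ = (15*B*L)^m := (mul_pow _ _ _).symm
            _ ≤ (100*((b:ℝ)*δ₁*δ₂))^m := by
                refine pow_le_pow_left₀
                  (mul_nonneg (mul_nonneg (by norm_num) hB0.le) hL0) ?_ m
                nlinarith
            _ = 100^m * ((b:ℝ)*δ₁*δ₂)^m := mul_pow _ _ _
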